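/- Let H = ⊕_{n≥0} H_n be an orthogonal Hilbert space decomposition and let A be a symmetric operator on the dense domain D of finite vectors (finite sums of elements of the H_n) such that A maps H_n ∩ D into H_{n−1} ⊕ H_n ⊕ H_{n+1} (a Jacobi block structure) and A maps D into D. If moreover there is a constant sequence of bounds ‖A f_n‖ ≤ C(n+1)‖f_n‖ for f_n ∈ H_n ∩ D, then A is essentially self-adjoint on D. -/

import Mathlib

open InnerProductSpace
set_option maxHeartbeats 2000000

private lemma aux_abs_min_sub_min (c a b : ℝ) : |min c a - min c b| ≤ |a - b| := by
  rcases le_total a b with h | h <;> rw [min_def, min_def] <;> split_ifs <;> rw [abs_le] <;>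
    constructor <;> rcases abs_cases (a - b) with ⟨h1, h2⟩ | ⟨h1, h2⟩ <;> linarith

private lemma aux_abs_max_sub_max (c a b : ℝ) : |max c a - max c b| ≤ |a - b| := by
  rcases le_total a b with h | h <;> rw [max_def, max_def] <;> split_ifs <;> rw [abs_le] <;>
    constructor <;> rcases abs_cases (a - b) with ⟨h1, h2⟩ | ⟨h1, h2⟩ <;> linarith

/-- A symmetric operator with Jacobi (block-tridiagonal) structure relative to an
orthogonal decomposition `H = ⊕ₙ Hₙ` and linear growth bound `‖A fₙ‖ ≤ C(n+1)‖fₙ‖`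
is essentially self-adjoint on the finite vectors, i.e. `A** = A*`. -/
theorem jacobi_operator_essentially_selfAdjoint
    {H : Type*} [NormedAddCommGroup H] [InnerProductSpace ℝ H] [CompleteSpace H]
    (V : ℕ → Submodule ℝ H) (hVclosed : ∀ n, IsClosed (V n : Set H))
    (hVorth : ∀ m n : ℕ, m ≠ n → ∀ u ∈ V m, ∀ v ∈ V n, ⟪u, v⟫_ℝ = 0)
    (hVdense : Dense ((⨆ n, V n : Submodule ℝ H) : Set H))
    (A : H →ₗ.[ℝ] H)
    (hdom : A.domain = ⨆ n, V n)
    (hsymm : ∀ u v : A.domain, ⟪A u, (v : H)⟫_ℝ = ⟪(u : H), A v⟫_ℝ)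
    (hinv : ∀ u : A.domain, A u ∈ (⨆ n, V n : Submodule ℝ H))
    (hblock : ∀ n : ℕ, ∀ u : A.domain, (u : H) ∈ V n →
      A u ∈ (V (n - 1) ⊔ V n ⊔ V (n + 1) : Submodule ℝ H))
    (C : ℝ) (hC : 0 < C)
    (hbound : ∀ n : ℕ, ∀ u : A.domain, (u : H) ∈ V n → ‖A u‖ ≤ C * (n + 1) * ‖(u : H)‖) :
    A.adjoint.adjoint = A.adjoint := by
  classical
  have hAdense : Dense (A.domain : Set H) := by rw [hdom]; exact hVdense
  have hformal : A.IsFormalAdjoint A := fun x y => hsymm x y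
  have hAleAdj : A ≤ A.adjoint := hformal.le_adjoint hAdense
  have hAdjDense : Dense (A.adjoint.domain : Set H) := hAdense.mono hAleAdj.1
  -- Hilbert sum machinery
  haveI : ∀ n, CompleteSpace (V n) := fun n => (hVclosed n).completeSpace_coe
  have hfam : OrthogonalFamily ℝ (fun n => V n) (fun n => (V n).subtypeₗᵢ) := by
    intro i j hij x y
    exact hVorth i j hij x x.2 y y.2
  have hHS : IsHilbertSum ℝ (fun n => V n) (fun n => (V n).subtypeₗᵢ) :=
    IsHilbertSum.mkInternal V hfam
      (Submodule.dense_iff_topologicalClosure_eq_top.mp hVdense).ge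
  set e := hHS.linearIsometryEquiv with he
  set comp : H → ℕ → H := fun x n => ((e x) n : H) with hcompdef
  have hmem : ∀ x n, comp x n ∈ V n := fun x n => ((e x) n).2
  have hHasSum : ∀ x : H, HasSum (fun n => comp x n) x := by
    intro x
    have h := hHS.hasSum_linearIsometryEquiv_symm (e x)
    rw [show hHS.linearIsometryEquiv.symm (e x) = x from e.symm_apply_apply x] at h
    exact h
  have hsq : ∀ x : H, Summable (fun n => ‖comp x n‖ ^ 2) := by
    intro x
    have h1 : Summable (fun n => (V n).subtypeₗᵢ ((e x) n)) := hfam.summable_of_lp (e x)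
    exact (hfam.summable_iff_norm_sq_summable (fun n => (e x) n)).mp h1
  have hproj : ∀ (x : H) (n : ℕ) (w : H), w ∈ V n → ⟪w, x⟫_ℝ = ⟪w, comp x n⟫_ℝ := by
    intro x n w hw
    have h1 : HasSum (fun m => ⟪w, comp x m⟫_ℝ) ⟪w, x⟫_ℝ := (innerSL ℝ w).hasSum (hHasSum x)
    have h2 : HasSum (fun m => ⟪w, comp x m⟫_ℝ) ⟪w, comp x n⟫_ℝ :=
      hasSum_single n (fun m hm => hVorth n m (Ne.symm hm) w hw _ (hmem x m))
    exact h1.unique h2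
  have hmemD : ∀ (x : H) (n : ℕ), comp x n ∈ A.domain := by
    intro x n; rw [hdom]; exact Submodule.mem_iSup_of_mem n (hmem x n)
  have key : ∀ u v : A.adjoint.domain,
      ⟪A.adjoint u, (v : H)⟫_ℝ = ⟪(u : H), A.adjoint v⟫_ℝ := by
    intro u v
    set Pu : ℕ → A.domain := fun n => ⟨comp (u : H) n, hmemD _ n⟩ with hPu
    set Pv : ℕ → A.domain := fun n => ⟨comp (v : H) n, hmemD _ n⟩ with hPv
    set b : ℕ → ℕ → ℝ := fun m n => ⟪comp (u : H) m, A (Pv n)⟫_ℝ with hb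
    -- expansion of inner products against block-supported vectors
    have rowcol : ∀ (x : H) (k : ℕ) (w : H),
        w ∈ (V (k - 1) ⊔ V k ⊔ V (k + 1) : Submodule ℝ H) → ∀ M : ℕ, k + 2 ≤ M →
        ⟪w, x⟫_ℝ = ∑ m ∈ Finset.range M, ⟪w, comp x m⟫_ℝ := by
      intro x k w hw M hM
      have hsingle : ∀ (z : H) (j : ℕ), z ∈ V j → j < M →
          ⟪z, x⟫_ℝ = ∑ m ∈ Finset.range M, ⟪z, comp x m⟫_ℝ := by
        intro z j hz hj
        rw [hproj x j z hz]
        exact (Finset.sum_eq_single j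
          (fun m _ hm => hVorth j m (Ne.symm hm) z hz _ (hmem x m))
          (fun h => absurd (Finset.mem_range.mpr hj) h)).symm
      obtain ⟨w', hw', r, hr, rfl⟩ := Submodule.mem_sup.mp hw
      obtain ⟨p, hp, q, hq, rfl⟩ := Submodule.mem_sup.mp hw'
      have e1 := hsingle p (k - 1) hp (by omega)
      have e2 := hsingle q k hq (by omega)
      have e3 := hsingle r (k + 1) hr (by omega)
      simp only [inner_add_left, Finset.sum_add_distrib, e1, e2, e3]
    have hrow : ∀ (n M : ℕ), n + 2 ≤ M →
        ⟪(u : H), A (Pv n)⟫_ℝ = ∑ m ∈ Finset.range M, b m n := by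
      intro n M hM
      rw [real_inner_comm, rowcol (u : H) n (A (Pv n)) (hblock n (Pv n) (hmem _ n)) M hM]
      exact Finset.sum_congr rfl fun m _ => real_inner_comm _ _
    have hcol : ∀ (m M : ℕ), m + 2 ≤ M →
        ⟪A (Pu m), (v : H)⟫_ℝ = ∑ n ∈ Finset.range M, b m n := by
      intro m M hM
      rw [rowcol (v : H) m (A (Pu m)) (hblock m (Pu m) (hmem _ m)) M hM]
      exact Finset.sum_congr rfl fun n _ => hsymm (Pu m) (Pv n)
    have hbzero : ∀ m n : ℕ, ¬(m = n ∨ m + 1 = n ∨ n + 1 = m) → b m n = 0 := by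
      intro m n h
      obtain ⟨w', hw', r, hr, hsum'⟩ := Submodule.mem_sup.mp (hblock n (Pv n) (hmem _ n))
      obtain ⟨p, hp, q, hq, rfl⟩ := Submodule.mem_sup.mp hw'
      have hbeq : b m n = ⟪comp (u : H) m, p⟫_ℝ + ⟪comp (u : H) m, q⟫_ℝ
          + ⟪comp (u : H) m, r⟫_ℝ := by
        simp only [hb, ← hsum', inner_add_right]
      rw [hbeq, hVorth m (n - 1) (by omega) _ (hmem _ m) p hp,
        hVorth m n (by omega) _ (hmem _ m) q hq,
        hVorth m (n + 1) (by omega) _ (hmem _ m) r hr]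
      ring
    have hbabs : ∀ m n : ℕ,
        |b m n| ≤ ‖comp (u : H) m‖ * (C * (n + 1) * ‖comp (v : H) n‖) := by
      intro m n
      calc |b m n| ≤ ‖comp (u : H) m‖ * ‖A (Pv n)‖ := abs_real_inner_le_norm _ _
        _ ≤ ‖comp (u : H) m‖ * (C * (n + 1) * ‖comp (v : H) n‖) :=
            mul_le_mul_of_nonneg_left (hbound n (Pv n) (hmem _ n)) (norm_nonneg _)
    -- the cutoff function
    set χ : ℕ → ℕ → ℝ := fun N n => min 1 (max 0 ((2 * (N : ℝ) - (n : ℝ)) / (N : ℝ))) with hχ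
    have hχ01 : ∀ N n, 0 ≤ χ N n ∧ χ N n ≤ 1 := by
      intro N n
      exact ⟨le_min (by norm_num) (le_max_left _ _), min_le_left _ _⟩
    have hχ1 : ∀ N n : ℕ, 1 ≤ N → n ≤ N → χ N n = 1 := by
      intro N n hN hn
      have hNpos : (0 : ℝ) < N := by exact_mod_cast hN
      have h1 : (1 : ℝ) ≤ (2 * (N : ℝ) - (n : ℝ)) / (N : ℝ) := by
        rw [le_div_iff₀ hNpos]
        have : (n : ℝ) ≤ N := by exact_mod_cast hn
        linarith
      simp only [hχ]
      rw [min_eq_left (le_max_of_le_right h1)]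
    have hχ0 : ∀ N n : ℕ, 1 ≤ N → 2 * N ≤ n → χ N n = 0 := by
      intro N n hN hn
      have hNpos : (0 : ℝ) < N := by exact_mod_cast hN
      have h1 : (2 * (N : ℝ) - (n : ℝ)) / (N : ℝ) ≤ 0 := by
        apply div_nonpos_of_nonpos_of_nonneg _ hNpos.le
        have : (2 * N : ℕ) ≤ (n : ℝ) := by exact_mod_cast hn
        push_cast at this
        linarith
      simp only [hχ]
      rw [max_eq_left h1, min_eq_right (by norm_num)]
    have hχlip : ∀ N m n : ℕ, 1 ≤ N → (m + 1 = n ∨ n + 1 = m) →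
        |χ N n - χ N m| ≤ 1 / (N : ℝ) := by
      intro N m n hN hadj
      have hNpos : (0 : ℝ) < N := by exact_mod_cast hN
      have l1 := aux_abs_min_sub_min 1 (max 0 ((2 * (N : ℝ) - (n : ℝ)) / (N : ℝ)))
        (max 0 ((2 * (N : ℝ) - (m : ℝ)) / (N : ℝ)))
      have l2 := aux_abs_max_sub_max 0 ((2 * (N : ℝ) - (n : ℝ)) / (N : ℝ))
        ((2 * (N : ℝ) - (m : ℝ)) / (N : ℝ))
      have l3 : (2 * (N : ℝ) - (n : ℝ)) / (N : ℝ) - (2 * (N : ℝ) - (m : ℝ)) / (N : ℝ)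
          = ((m : ℝ) - (n : ℝ)) / (N : ℝ) := by ring
      have l4 : |((m : ℝ) - (n : ℝ)) / (N : ℝ)| = 1 / (N : ℝ) := by
        rcases hadj with h | h
        · subst h; rw [abs_div, abs_of_pos hNpos]
          congr 1
          push_cast
          rw [show (m : ℝ) - ((m : ℝ) + 1) = -1 by ring, abs_neg, abs_one]
        · subst h; rw [abs_div, abs_of_pos hNpos]
          congr 1
          push_cast
          rw [show (n : ℝ) + 1 - (n : ℝ) = 1 by ring, abs_one]
      calc |χ N n - χ N m| ≤ |max 0 ((2 * (N : ℝ) - (n : ℝ)) / (N : ℝ))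
            - max 0 ((2 * (N : ℝ) - (m : ℝ)) / (N : ℝ))| := l1
        _ ≤ |(2 * (N : ℝ) - (n : ℝ)) / (N : ℝ) - (2 * (N : ℝ) - (m : ℝ)) / (N : ℝ)| := l2
        _ = 1 / (N : ℝ) := by rw [l3, l4]
    -- the smoothly truncated partial sums
    set S : ℕ → H → H := fun N x => ∑ n ∈ Finset.range (2 * N + 2), χ N n • comp x n with hS
    have hSmem : ∀ N x, S N x ∈ A.domain := fun N x =>
      Submodule.sum_mem _ fun n _ => Submodule.smul_mem _ _ (hmemD x n)
    have hSelu : ∀ N : ℕ, (⟨S N (u : H), hSmem N (u : H)⟩ : A.domain)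
        = ∑ n ∈ Finset.range (2 * N + 2), χ N n • Pu n := by
      intro N
      apply Subtype.ext
      rw [Submodule.coe_sum]
      simp only [hS, Submodule.coe_smul, hPu]
    have hSelv : ∀ N : ℕ, (⟨S N (v : H), hSmem N (v : H)⟩ : A.domain)
        = ∑ n ∈ Finset.range (2 * N + 2), χ N n • Pv n := by
      intro N
      apply Subtype.ext
      rw [Submodule.coe_sum]
      simp only [hS, Submodule.coe_smul, hPv]
    have hASelu : ∀ N : ℕ, A ⟨S N (u : H), hSmem N (u : H)⟩
        = ∑ n ∈ Finset.range (2 * N + 2), χ N n • A (Pu n) := by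
      intro N
      rw [hSelu N]
      show A.toFun _ = _
      rw [map_sum]
      exact Finset.sum_congr rfl fun n _ => A.toFun.map_smul _ _
    have hASelv : ∀ N : ℕ, A ⟨S N (v : H), hSmem N (v : H)⟩
        = ∑ n ∈ Finset.range (2 * N + 2), χ N n • A (Pv n) := by
      intro N
      rw [hSelv N]
      show A.toFun _ = _
      rw [map_sum]
      exact Finset.sum_congr rfl fun n _ => A.toFun.map_smul _ _
    have hFA : A.adjoint.IsFormalAdjoint A := LinearPMap.adjoint_isFormalAdjoint hAdense
    have hDN : ∀ N : ℕ, 1 ≤ N →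
        ⟪A.adjoint u, S N (v : H)⟫_ℝ - ⟪S N (u : H), A.adjoint v⟫_ℝ
          = ∑ n ∈ Finset.range (2 * N + 2), ∑ m ∈ Finset.range (2 * N + 2),
              (χ N n - χ N m) * b m n := by
      intro N hN
      have hL : ⟪A.adjoint u, S N (v : H)⟫_ℝ
          = ∑ n ∈ Finset.range (2 * N + 2), χ N n * ∑ m ∈ Finset.range (2 * N + 2), b m n := by
        have h1 : ⟪A.adjoint u, S N (v : H)⟫_ℝ = ⟪(u : H), A ⟨S N (v : H), hSmem N (v : H)⟩⟫_ℝ :=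
          hFA u ⟨S N (v : H), hSmem N (v : H)⟩
        rw [h1, hASelv, inner_sum]
        refine Finset.sum_congr rfl fun n hn => ?_
        rw [real_inner_smul_right]
        by_cases hcase : 2 * N ≤ n
        · rw [hχ0 N n hN hcase]; ring
        · rw [hrow n (2 * N + 2) (by omega)]
      have hR : ⟪S N (u : H), A.adjoint v⟫_ℝ
          = ∑ m ∈ Finset.range (2 * N + 2), χ N m * ∑ n ∈ Finset.range (2 * N + 2), b m n := by
        have h1 : ⟪S N (u : H), A.adjoint v⟫_ℝ = ⟪A ⟨S N (u : H), hSmem N (u : H)⟩, (v : H)⟫_ℝ :=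
          (hFA.symm ⟨S N (u : H), hSmem N (u : H)⟩ v).symm
        rw [h1, hASelu, sum_inner]
        refine Finset.sum_congr rfl fun m hm => ?_
        rw [real_inner_smul_left]
        by_cases hcase : 2 * N ≤ m
        · rw [hχ0 N m hN hcase]; ring
        · rw [hcol m (2 * N + 2) (by omega)]
      rw [hL, hR]
      simp only [sub_mul, Finset.sum_sub_distrib, Finset.mul_sum]
      congr 1
      rw [Finset.sum_comm]
    -- tail sums
    set t : ℕ → ℝ := fun k => ‖comp (u : H) k‖ ^ 2 + ‖comp (v : H) k‖ ^ 2 with ht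
    have ht0 : ∀ k, 0 ≤ t k := fun k => add_nonneg (sq_nonneg _) (sq_nonneg _)
    have htsum : Summable t := (hsq (u : H)).add (hsq (v : H))
    have htu : ∀ k, ‖comp (u : H) k‖ ^ 2 ≤ t k := fun k => by
      simp only [ht]; have := sq_nonneg ‖comp (v : H) k‖; linarith
    have htv : ∀ k, ‖comp (v : H) k‖ ^ 2 ≤ t k := fun k => by
      simp only [ht]; have := sq_nonneg ‖comp (u : H) k‖; linarith
    clear_value t
    clear ht
    have htail : ∀ (w : ℕ → ℝ), (∀ k, 0 ≤ w k) → Summable w →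
        ∀ (s : Finset ℕ) (g : ℕ → ℕ) (K : ℕ),
        (∀ a ∈ s, ∀ b ∈ s, g a = g b → a = b) → (∀ n ∈ s, K ≤ g n) →
        ∑ n ∈ s, w (g n) ≤ ∑' k, w (k + K) := by
      intro w hw0 hws s g K hinj hge
      have h1 : ∑ n ∈ s, w (g n) = ∑ j ∈ s.image g, w j := (Finset.sum_image hinj).symm
      have hmemim : ∀ j ∈ s.image g, K ≤ j := by
        intro j hj
        obtain ⟨a, ha, rfl⟩ := Finset.mem_image.mp hj
        exact hge a ha
      have hinj2 : ∀ a ∈ s.image g, ∀ b ∈ s.image g, a - K = b - K → a = b := by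
        intro a ha b hb hab
        have := hmemim a ha; have := hmemim b hb; omega
      have h2 : ∑ j ∈ s.image g, w j = ∑ i ∈ (s.image g).image (· - K), w (i + K) := by
        rw [Finset.sum_image hinj2]
        refine Finset.sum_congr rfl fun j hj => ?_
        congr 1
        have := hmemim j hj; omega
      rw [h1, h2]
      exact Summable.sum_le_tsum _ (fun i _ => hw0 _) ((summable_nat_add_iff K).mpr hws)
    set T : ℕ → ℝ := fun K => ∑' k, t (k + K) with hT
    have hTnn : ∀ K, 0 ≤ T K := fun K => tsum_nonneg fun k => ht0 _
    -- the key quantitative bound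
    have habs : ∀ N : ℕ, 1 ≤ N →
        |∑ n ∈ Finset.range (2 * N + 2), ∑ m ∈ Finset.range (2 * N + 2),
            (χ N n - χ N m) * b m n| ≤ 8 * C * T (N - 1) := by
      intro N hN
      have hNpos : (0 : ℝ) < N := by exact_mod_cast hN
      set M := 2 * N + 2 with hM
      set F : ℕ → ℕ → ℝ := fun m n =>
        if (m + 1 = n ∨ n + 1 = m) ∧ N ≤ m ∧ N ≤ n then 2 * C * (t m + t n) else 0 with hF
      have hF0 : ∀ m n, 0 ≤ F m n := by
        intro m n; simp only [hF]; split_ifs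
        · have := ht0 m; have := ht0 n; positivity
        · exact le_refl 0
      have hterm : ∀ n ∈ Finset.range M, ∀ m ∈ Finset.range M,
          |(χ N n - χ N m) * b m n| ≤ F m n := by
        intro n hn m _
        by_cases hadj : m + 1 = n ∨ n + 1 = m
        · by_cases hNN : N ≤ m ∧ N ≤ n
          · have h1 : |χ N n - χ N m| ≤ 1 / (N : ℝ) := hχlip N m n hN hadj
            have h2 := hbabs m n
            have h3 : ((n : ℝ) + 1) ≤ 4 * (N : ℝ) := by
              have hn4 : n + 1 ≤ 4 * N := by
                have := Finset.mem_range.mp hn; omega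
              exact_mod_cast hn4
            have h4 : ‖comp (u : H) m‖ * ‖comp (v : H) n‖ ≤ (t m + t n) / 2 := by
              have e1 := sq_nonneg (‖comp (u : H) m‖ - ‖comp (v : H) n‖)
              have e2 := htu m
              have e3 := htv n
              nlinarith
            have hFval : F m n = 2 * C * (t m + t n) := by
              simp only [hF]; rw [if_pos ⟨hadj, hNN⟩]
            rw [hFval, abs_mul]
            calc |χ N n - χ N m| * |b m n|
                ≤ (1 / (N : ℝ)) * (‖comp (u : H) m‖ * (C * ((n : ℝ) + 1) * ‖comp (v : H) n‖)) := by
                  apply mul_le_mul h1 h2 (abs_nonneg _)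
                  positivity
              _ = (C * (((n : ℝ) + 1) / (N : ℝ))) * (‖comp (u : H) m‖ * ‖comp (v : H) n‖) := by
                  ring
              _ ≤ (C * 4) * ((t m + t n) / 2) := by
                  apply mul_le_mul _ h4 (by positivity) (by positivity)
                  apply mul_le_mul_of_nonneg_left _ hC.le
                  rw [div_le_iff₀ hNpos]; linarith
              _ = 2 * C * (t m + t n) := by ring
          · have hnm : n ≤ N ∧ m ≤ N := by omega
            rw [hχ1 N n hN hnm.1, hχ1 N m hN hnm.2, sub_self, zero_mul, abs_zero]
            exact hF0 m n
        · by_cases heq : m = n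
          · subst heq; rw [sub_self, zero_mul, abs_zero]; exact hF0 m m
          · rw [hbzero m n (by omega), mul_zero, abs_zero]; exact hF0 m n
      set G : ℕ → ℝ := fun n =>
        if N ≤ n then 2 * C * (t (n - 1) + t n) + 2 * C * (t (n + 1) + t n) else 0 with hG
      have hstep1 : ∀ n ∈ Finset.range M,
          ∑ m ∈ Finset.range M, F m n ≤ F (n - 1) n + F (n + 1) n := by
        intro n _
        have hzero : ∀ m ∈ Finset.range M, F m n ≠ 0 → (m = n - 1 ∨ m = n + 1) := by
          intro m _ hFm
          by_contra hcon
          push_neg at hcon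
          apply hFm
          simp only [hF]
          rw [if_neg]
          obtain ⟨h1, h2⟩ := hcon
          omega
        rw [← Finset.sum_filter_of_ne hzero]
        have hsub : (Finset.range M).filter (fun m => m = n - 1 ∨ m = n + 1)
            ⊆ {n - 1, n + 1} := by
          intro m hm
          simp only [Finset.mem_filter] at hm
          simp only [Finset.mem_insert, Finset.mem_singleton]
          exact hm.2
        calc ∑ m ∈ (Finset.range M).filter (fun m => m = n - 1 ∨ m = n + 1), F m n
            ≤ ∑ m ∈ ({n - 1, n + 1} : Finset ℕ), F m n :=
              Finset.sum_le_sum_of_subset_of_nonneg hsub (fun i _ _ => hF0 i n)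
          _ = F (n - 1) n + F (n + 1) n := by
              rw [Finset.sum_insert (by simp only [Finset.mem_singleton]; omega),
                Finset.sum_singleton]
      have hstep2 : ∀ n, F (n - 1) n + F (n + 1) n ≤ G n := by
        intro n
        by_cases hn : N ≤ n
        · simp only [hG]; rw [if_pos hn]
          have hA : F (n - 1) n ≤ 2 * C * (t (n - 1) + t n) := by
            simp only [hF]; split_ifs
            · exact le_refl _
            · have := ht0 (n - 1); have := ht0 n; positivity
          have hB : F (n + 1) n ≤ 2 * C * (t (n + 1) + t n) := by
            simp only [hF]; split_ifs
            · exact le_refl _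
            · have := ht0 (n + 1); have := ht0 n; positivity
          linarith
        · simp only [hG]; rw [if_neg hn]
          have hA : F (n - 1) n = 0 := by simp only [hF]; rw [if_neg (by omega)]
          have hB : F (n + 1) n = 0 := by simp only [hF]; rw [if_neg (by omega)]
          rw [hA, hB]; norm_num
      have hstep3 : ∑ n ∈ Finset.range M, G n ≤ 8 * C * T (N - 1) := by
        have hGfilter : ∑ n ∈ Finset.range M, G n
            = ∑ n ∈ (Finset.range M).filter (fun n => N ≤ n),
                (2 * C * (t (n - 1) + t n) + 2 * C * (t (n + 1) + t n)) := by
          rw [Finset.sum_filter]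
        set s := (Finset.range M).filter (fun n => N ≤ n) with hs
        have hges : ∀ n ∈ s, N ≤ n := fun n hn => (Finset.mem_filter.mp hn).2
        have hta : ∑ n ∈ s, t (n - 1) ≤ T (N - 1) :=
          htail t ht0 htsum s (fun n => n - 1) (N - 1)
            (fun a ha' b hb' hab => by
              have h1 := hges a ha'; have h2 := hges b hb'
              replace hab : a - 1 = b - 1 := hab; omega)
            (fun n hn => by have h1 := hges n hn; show N - 1 ≤ n - 1; omega)
        have htb : ∑ n ∈ s, t n ≤ T (N - 1) :=
          htail t ht0 htsum s id (N - 1) (fun a _ b _ hab => hab)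
            (fun n hn => by have h1 := hges n hn; show N - 1 ≤ n; omega)
        have htc : ∑ n ∈ s, t (n + 1) ≤ T (N - 1) :=
          htail t ht0 htsum s (fun n => n + 1) (N - 1)
            (fun a _ b _ hab => by replace hab : a + 1 = b + 1 := hab; omega)
            (fun n hn => by have h1 := hges n hn; show N - 1 ≤ n + 1; omega)
        rw [hGfilter]
        have hexp : ∑ n ∈ s, (2 * C * (t (n - 1) + t n) + 2 * C * (t (n + 1) + t n))
            = 2 * C * ((∑ n ∈ s, t (n - 1)) + 2 * (∑ n ∈ s, t n) + (∑ n ∈ s, t (n + 1))) := by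
          simp only [Finset.sum_add_distrib, ← Finset.mul_sum]
          ring
        rw [hexp]
        calc 2 * C * ((∑ n ∈ s, t (n - 1)) + 2 * (∑ n ∈ s, t n) + (∑ n ∈ s, t (n + 1)))
            ≤ 2 * C * (4 * T (N - 1)) := by
              apply mul_le_mul_of_nonneg_left _ (by positivity)
              linarith
          _ = 8 * C * T (N - 1) := by ring
      calc |∑ n ∈ Finset.range M, ∑ m ∈ Finset.range M, (χ N n - χ N m) * b m n|
          ≤ ∑ n ∈ Finset.range M, |∑ m ∈ Finset.range M, (χ N n - χ N m) * b m n| :=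
            Finset.abs_sum_le_sum_abs _ _
        _ ≤ ∑ n ∈ Finset.range M, ∑ m ∈ Finset.range M, |(χ N n - χ N m) * b m n| :=
            Finset.sum_le_sum fun n _ => Finset.abs_sum_le_sum_abs _ _
        _ ≤ ∑ n ∈ Finset.range M, ∑ m ∈ Finset.range M, F m n :=
            Finset.sum_le_sum fun n hn => Finset.sum_le_sum fun m hm => hterm n hn m hm
        _ ≤ ∑ n ∈ Finset.range M, (F (n - 1) n + F (n + 1) n) := Finset.sum_le_sum hstep1
        _ ≤ ∑ n ∈ Finset.range M, G n := Finset.sum_le_sum fun n _ => hstep2 n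
        _ ≤ 8 * C * T (N - 1) := hstep3
    -- quantitative convergence of the truncations
    have hSbound : ∀ z : H, ∀ N : ℕ, 1 ≤ N →
        ‖S N z - z‖ ^ 2 ≤ ∑' k, ‖comp z (k + N)‖ ^ 2 := by
      intro z N hN
      have hz0 : ∀ n, n ∉ Finset.range (2 * N + 2) → χ N n • comp z n = 0 := by
        intro n hn
        rw [Finset.mem_range, not_lt] at hn
        rw [hχ0 N n hN (by omega), zero_smul]
      have hs1 : HasSum (fun n => χ N n • comp z n) (S N z) :=
        hasSum_sum_of_ne_finset_zero hz0
      have hs2 : HasSum (fun n => χ N n • comp z n - comp z n) (S N z - z) :=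
        hs1.sub (hHasSum z)
      have hfin : ∀ s : Finset ℕ,
          ‖∑ n ∈ s, (χ N n • comp z n - comp z n)‖ ^ 2 ≤ ∑' k, ‖comp z (k + N)‖ ^ 2 := by
        intro s
        set l : ∀ n : ℕ, V n := fun n => (χ N n - 1) • ((e z) n) with hl
        have hns := hfam.norm_sum l s
        have hsum_eq : ∑ n ∈ s, ((V n).subtypeₗᵢ (l n) : H)
            = ∑ n ∈ s, (χ N n • comp z n - comp z n) := by
          refine Finset.sum_congr rfl fun n _ => ?_
          simp only [hl, Submodule.coe_subtypeₗᵢ, Submodule.coe_smul, sub_smul, one_smul,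
            map_sub, map_smul, Submodule.coe_subtype]
          rfl
        rw [← hsum_eq, hns]
        have hterm2 : ∀ n ∈ s, ‖l n‖ ^ 2 ≤ (if N ≤ n then ‖comp z n‖ ^ 2 else 0) := by
          intro n _
          by_cases hn : N ≤ n
          · rw [if_pos hn]
            have h1 : ‖l n‖ = |χ N n - 1| * ‖comp z n‖ := by
              simp only [hl, norm_smul, Real.norm_eq_abs]
              rfl
            rw [h1, mul_pow]
            have h2 : |χ N n - 1| ≤ 1 := by
              have := hχ01 N n; rw [abs_le]; constructor <;> linarith [this.1, this.2]
            have h3 : |χ N n - 1| ^ 2 ≤ 1 := by nlinarith [abs_nonneg (χ N n - 1)]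
            nlinarith [mul_le_mul_of_nonneg_right h3 (sq_nonneg ‖comp z n‖)]
          · rw [if_neg hn]
            have hone : χ N n = 1 := hχ1 N n hN (by omega)
            simp only [hl, hone, sub_self, zero_smul, norm_zero]
            norm_num
        calc ∑ n ∈ s, ‖l n‖ ^ 2 ≤ ∑ n ∈ s, (if N ≤ n then ‖comp z n‖ ^ 2 else 0) :=
            Finset.sum_le_sum hterm2
          _ = ∑ n ∈ s.filter (fun n => N ≤ n), ‖comp z n‖ ^ 2 := (Finset.sum_filter _ _).symm
          _ ≤ ∑' k, ‖comp z (k + N)‖ ^ 2 :=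
            htail (fun k => ‖comp z k‖ ^ 2) (fun k => sq_nonneg _) (hsq z)
              (s.filter (fun n => N ≤ n)) id N (fun a _ b _ hab => hab)
              (fun n hn => (Finset.mem_filter.mp hn).2)
      have h5 : Filter.Tendsto (fun s : Finset ℕ => ∑ n ∈ s, (χ N n • comp z n - comp z n))
          Filter.atTop (nhds (S N z - z)) := hs2
      exact le_of_tendsto ((h5.norm).pow 2) (Filter.Eventually.of_forall hfin)
    have hSconv : ∀ z : H, Filter.Tendsto (fun N => S N z) Filter.atTop (nhds z) := by
      intro z
      rw [tendsto_iff_norm_sub_tendsto_zero]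
      have htail0 : Filter.Tendsto (fun N : ℕ => ∑' k, ‖comp z (k + N)‖ ^ 2)
          Filter.atTop (nhds 0) := tendsto_sum_nat_add (fun j => ‖comp z j‖ ^ 2)
      have hsq0 : Filter.Tendsto (fun N => ‖S N z - z‖ ^ 2) Filter.atTop (nhds 0) := by
        apply squeeze_zero' (Filter.Eventually.of_forall fun N => sq_nonneg _) ?_ htail0
        filter_upwards [Filter.eventually_ge_atTop 1] with N hN
        exact hSbound z N hN
      have hcomp := (Real.continuous_sqrt.tendsto' 0 0 Real.sqrt_zero).comp hsq0
      have heq : (fun N => ‖S N z - z‖)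
          = fun N => Real.sqrt (‖S N z - z‖ ^ 2) := by
        funext N; rw [Real.sqrt_sq (norm_nonneg _)]
      rw [heq]
      exact hcomp
    -- put everything together
    have hlim1 : Filter.Tendsto
        (fun N => ⟪A.adjoint u, S N (v : H)⟫_ℝ - ⟪S N (u : H), A.adjoint v⟫_ℝ)
        Filter.atTop
        (nhds (⟪A.adjoint u, (v : H)⟫_ℝ - ⟪(u : H), A.adjoint v⟫_ℝ)) :=
      (Filter.Tendsto.inner tendsto_const_nhds (hSconv (v : H))).sub
        (Filter.Tendsto.inner (hSconv (u : H)) tendsto_const_nhds)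
    have hto : Filter.Tendsto (fun N : ℕ => 8 * C * T (N - 1)) Filter.atTop (nhds 0) := by
      have h0 : Filter.Tendsto (fun N : ℕ => T (N - 1)) Filter.atTop (nhds 0) := by
        apply (tendsto_sum_nat_add t).comp
        exact Filter.tendsto_atTop_atTop.mpr fun K => ⟨K + 1, fun a ha => by omega⟩
      have := h0.const_mul (8 * C)
      simpa using this
    have hev : ∀ᶠ N : ℕ in Filter.atTop,
        ‖⟪A.adjoint u, S N (v : H)⟫_ℝ - ⟪S N (u : H), A.adjoint v⟫_ℝ‖ ≤ 8 * C * T (N - 1) := by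
      filter_upwards [Filter.eventually_ge_atTop 1] with N hN
      rw [Real.norm_eq_abs, hDN N hN]
      exact habs N hN
    have hlim2 : Filter.Tendsto
        (fun N => ⟪A.adjoint u, S N (v : H)⟫_ℝ - ⟪S N (u : H), A.adjoint v⟫_ℝ)
        Filter.atTop (nhds 0) := squeeze_zero_norm' hev hto
    have hfinal := tendsto_nhds_unique hlim1 hlim2
    linarith [hfinal]





  have hadjFA : A.adjoint.adjoint.IsFormalAdjoint A.adjoint :=
    LinearPMap.adjoint_isFormalAdjoint hAdjDense
  have h1 : A.adjoint ≤ A.adjoint.adjoint :=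
    (show A.adjoint.IsFormalAdjoint A.adjoint from key).le_adjoint hAdjDense
  have h2 : A.adjoint.adjoint ≤ A.adjoint := by
    have hFA : A.IsFormalAdjoint A.adjoint.adjoint := by
      intro x y
      have hx' : (x : H) ∈ A.adjoint.domain := hAleAdj.1 x.2
      have hxx : A x = A.adjoint ⟨(x : H), hx'⟩ := hAleAdj.2 rfl
      calc ⟪A x, (y : H)⟫_ℝ = ⟪(y : H), A x⟫_ℝ := real_inner_comm _ _
        _ = ⟪(y : H), A.adjoint ⟨(x : H), hx'⟩⟫_ℝ := by rw [hxx]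
        _ = ⟪A.adjoint.adjoint y, (x : H)⟫_ℝ := (hadjFA y ⟨(x : H), hx'⟩).symm
        _ = ⟪(x : H), A.adjoint.adjoint y⟫_ℝ := real_inner_comm _ _
    exact hFA.le_adjoint hAdense
  exact LinearPMap.eq_of_le_of_domain_eq h2 (le_antisymm h2.1 h1.1)
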